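/- Let T be the 3×3 upper triangular matrix with 1's on the diagonal and entries a, b ≥ 0 on the superdiagonal and c ≥ 0 in the corner (T_{12}=a, T_{23}=b, T_{13}=c). Then T has an entrywise nonnegative upper triangular square root if and only if c ≥ ab/4, and T is embeddable into a semigroup generated by a nonnegative strictly upper triangular matrix if and only if c ≥ ab/2. -/

import Mathlib

open Matrix

lemma cube_zero (α β γ : ℝ) :
    (!![0, α, γ; 0, 0, β; 0, 0, 0] : Matrix (Fin 3) (Fin 3) ℝ) ^ 3 = 0 := by
  rw [pow_succ, pow_two]
  ext i j
  fin_cases i <;> fin_cases j <;>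
    simp [Matrix.mul_apply, Fin.sum_univ_three, Matrix.vecHead, Matrix.vecTail]

lemma exp_of_cube_zero (A : Matrix (Fin 3) (Fin 3) ℝ) (h : A ^ 3 = 0) :
    NormedSpace.exp A = 1 + A + (2⁻¹ : ℝ) • A ^ 2 := by
  rw [NormedSpace.exp_eq_tsum (𝕂 := ℝ)]
  beta_reduce
  have hzero : ∀ n ∉ Finset.range 3, ((n.factorial : ℝ)⁻¹ • A ^ n) = 0 := by
    intro n hn
    simp only [Finset.mem_range, not_lt] at hn
    have : A ^ n = 0 := by
      calc A ^ n = A ^ 3 * A ^ (n - 3) := by rw [← pow_add]; congr 1; omega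
      _ = 0 := by rw [h, zero_mul]
    simp [this]
  rw [tsum_eq_sum hzero]
  simp [Finset.sum_range_succ, Nat.factorial]

lemma exp_tri (α β γ : ℝ) :
    NormedSpace.exp (!![0, α, γ; 0, 0, β; 0, 0, 0] : Matrix (Fin 3) (Fin 3) ℝ) =
      !![1, α, γ + α * β / 2; 0, 1, β; 0, 0, 1] := by
  rw [exp_of_cube_zero _ (cube_zero α β γ), pow_two]
  ext i j
  fin_cases i <;> fin_cases j <;>
    simp [Matrix.mul_apply, Fin.sum_univ_three, Matrix.one_apply, Matrix.vecHead,
      Matrix.vecTail] <;> ring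

lemma sq_tri (α β γ : ℝ) :
    (!![1, α, γ; 0, 1, β; 0, 0, 1] : Matrix (Fin 3) (Fin 3) ℝ) ^ 2 =
      !![1, 2 * α, 2 * γ + α * β; 0, 1, 2 * β; 0, 0, 1] := by
  rw [pow_two]
  ext i j
  fin_cases i <;> fin_cases j <;>
    simp [Matrix.mul_apply, Fin.sum_univ_three, Matrix.vecHead, Matrix.vecTail] <;> ring

/-- Let `T = [[1,a,c],[0,1,b],[0,0,1]]` with `a, b, c ≥ 0`. Then `T` has an entrywise
nonnegative upper triangular square root iff `c ≥ ab/4`, and `T = exp A` for some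
entrywise nonnegative strictly upper triangular matrix `A` (i.e. `T` embeds into the
positive semigroup `(exp (tA))_{t ≥ 0}`) iff `c ≥ ab/2`. -/
theorem stmt_19 (a b c : ℝ) (ha : 0 ≤ a) (hb : 0 ≤ b) (hc : 0 ≤ c)
    (T : Matrix (Fin 3) (Fin 3) ℝ)
    (hT : T = !![1, a, c; 0, 1, b; 0, 0, 1]) :
    ((∃ S : Matrix (Fin 3) (Fin 3) ℝ,
        (∀ i j, 0 ≤ S i j) ∧ (∀ i j : Fin 3, (j : ℕ) < (i : ℕ) → S i j = 0) ∧
        S ^ 2 = T) ↔ a * b / 4 ≤ c) ∧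
    ((∃ A : Matrix (Fin 3) (Fin 3) ℝ,
        (∀ i j, 0 ≤ A i j) ∧ (∀ i j : Fin 3, (j : ℕ) ≤ (i : ℕ) → A i j = 0) ∧
        NormedSpace.exp A = T) ↔ a * b / 2 ≤ c) := by
  subst hT
  constructor
  · constructor
    · rintro ⟨S, hnn, htri, hsq⟩
      have h10 : S 1 0 = 0 := htri 1 0 (by norm_num)
      have h20 : S 2 0 = 0 := htri 2 0 (by norm_num)
      have h21 : S 2 1 = 0 := htri 2 1 (by norm_num)
      have e00 : (S ^ 2) 0 0 = 1 := by rw [hsq]; simp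
      have e11 : (S ^ 2) 1 1 = 1 := by rw [hsq]; simp
      have e22 : (S ^ 2) 2 2 = 1 := by rw [hsq]; simp
      have e01 : (S ^ 2) 0 1 = a := by rw [hsq]; simp
      have e12 : (S ^ 2) 1 2 = b := by rw [hsq]; simp
      have e02 : (S ^ 2) 0 2 = c := by rw [hsq]; simp
      rw [pow_two] at e00 e11 e22 e01 e12 e02
      simp only [Matrix.mul_apply, Fin.sum_univ_three, h10, h20, h21, mul_zero, zero_mul,
        add_zero, zero_add] at e00 e11 e22 e01 e12 e02
      have d0 : S 0 0 = 1 := by nlinarith [hnn 0 0]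
      have d1 : S 1 1 = 1 := by nlinarith [hnn 1 1]
      have d2 : S 2 2 = 1 := by nlinarith [hnn 2 2]
      rw [d0, d1] at e01
      rw [d1, d2] at e12
      rw [d0, d2] at e02
      nlinarith [hnn 0 2, hnn 0 1, hnn 1 2]
    · intro h
      refine ⟨!![1, a/2, (c - a*b/4)/2; 0, 1, b/2; 0, 0, 1], ?_, ?_, ?_⟩
      · intro i j
        fin_cases i <;> fin_cases j <;>
          simp [Matrix.vecHead, Matrix.vecTail] <;> linarith
      · intro i j hij
        fin_cases i <;> fin_cases j <;>
          simp_all [Matrix.vecHead, Matrix.vecTail]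
      · rw [sq_tri]
        congr 1 <;> ring
  · constructor
    · rintro ⟨A, hnn, htri, hexp⟩
      have h00 : A 0 0 = 0 := htri 0 0 (by norm_num)
      have h11 : A 1 1 = 0 := htri 1 1 (by norm_num)
      have h22 : A 2 2 = 0 := htri 2 2 (by norm_num)
      have h10 : A 1 0 = 0 := htri 1 0 (by norm_num)
      have h20 : A 2 0 = 0 := htri 2 0 (by norm_num)
      have h21 : A 2 1 = 0 := htri 2 1 (by norm_num)
      have hA : A = !![0, A 0 1, A 0 2; 0, 0, A 1 2; 0, 0, 0] := by
        ext i j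
        fin_cases i <;> fin_cases j <;>
          simp [h00, h11, h22, h10, h20, h21, Matrix.vecHead, Matrix.vecTail]
      rw [hA, exp_tri] at hexp
      have e01 := congrFun (congrFun hexp 0) 1
      have e12 := congrFun (congrFun hexp 1) 2
      have e02 := congrFun (congrFun hexp 0) 2
      simp [Matrix.vecHead, Matrix.vecTail] at e01 e12 e02
      nlinarith [hnn 0 2, hnn 0 1, hnn 1 2]
    · intro h
      refine ⟨!![0, a, c - a*b/2; 0, 0, b; 0, 0, 0], ?_, ?_, ?_⟩
      · intro i j
        fin_cases i <;> fin_cases j <;>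
          simp [Matrix.vecHead, Matrix.vecTail] <;> linarith
      · intro i j hij
        fin_cases i <;> fin_cases j <;>
          simp_all [Matrix.vecHead, Matrix.vecTail]
      · rw [exp_tri]
        congr 1 <;> ring
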